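/- For every N ∈ ℕ there exists a continuous injective map f : 𝕋 → ℂ such that f̂(n) = 0 for all integers n with |n| ≤ N. -/

import Mathlib

open Complex MeasureTheory intervalIntegral

noncomputable def fCoeff (f : ℂ → ℂ) (n : ℤ) : ℂ :=
  (1 / (2 * Real.pi) : ℂ) * ∫ θ in (0:ℝ)..(2 * Real.pi),
    f (Complex.exp (θ * Complex.I)) * Complex.exp (-(n : ℂ) * θ * Complex.I)

/- ### Auxiliary construction:
`f z = z * Phi ((z ^ m).re)` with `m = 2N+3`, where
`Phi c = (1 + c/2) * exp (i (2 arccos c + √(1 - c²)))`. -/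

noncomputable def Phi (c : ℝ) : ℂ :=
  ((1 + c / 2 : ℝ) : ℂ) *
    Complex.exp (Complex.I * ((2 * Real.arccos c + Real.sqrt (1 - c ^ 2) : ℝ) : ℂ))

noncomputable def FF (s : ℝ) : ℂ := Phi (Real.cos s)

lemma continuous_Phi : Continuous Phi := by
  unfold Phi
  apply Continuous.mul
  · exact Complex.continuous_ofReal.comp (by continuity)
  · apply Complex.continuous_exp.comp
    apply Continuous.mul continuous_const
    exact Complex.continuous_ofReal.comp
      (((continuous_const.mul Real.continuous_arccos)).add
        (Real.continuous_sqrt.comp (by continuity)))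

lemma continuous_FF : Continuous FF := continuous_Phi.comp Real.continuous_cos

lemma abs_Phi {c : ℝ} (hc : |c| ≤ 1) : ‖Phi c‖ = 1 + c / 2 := by
  have hc' := abs_le.mp hc
  unfold Phi
  rw [norm_mul, Complex.norm_real, Real.norm_eq_abs, Complex.norm_exp]
  have h0 : (Complex.I * ((2 * Real.arccos c + Real.sqrt (1 - c ^ 2) : ℝ) : ℂ)).re = 0 := by
    simp
  rw [h0, Real.exp_zero, mul_one, abs_of_pos (by linarith)]

lemma Phi_ne_zero {c : ℝ} (hc : |c| ≤ 1) : Phi c ≠ 0 := by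
  intro h
  have h2 := abs_Phi hc
  rw [h, norm_zero] at h2
  have := abs_le.mp hc
  linarith

lemma FF_periodic : Function.Periodic FF (2 * Real.pi) := by
  intro s
  unfold FF
  rw [Real.cos_add_two_pi]

lemma hasDerivAt_inner (a c b : ℝ) (s : ℝ) :
    HasDerivAt (fun t : ℝ => Complex.exp (Complex.I * ((a + c * t + b * Real.sin t : ℝ) : ℂ)))
      (Complex.exp (Complex.I * ((a + c * s + b * Real.sin s : ℝ) : ℂ)) *
        (Complex.I * ((c + b * Real.cos s : ℝ) : ℂ))) s := by
  have h1 : HasDerivAt (fun t : ℝ => a + c * t + b * Real.sin t) (c + b * Real.cos s) s := by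
    exact ((((hasDerivAt_id s).const_mul c).const_add a).add
      ((Real.hasDerivAt_sin s).const_mul b)).congr_deriv (by ring)
  exact (h1.ofReal_comp.const_mul Complex.I).cexp

lemma int_FF_first : (∫ s in (0:ℝ)..Real.pi, FF s) = 0 := by
  have hπ := Real.pi_pos
  have key : ∀ s ∈ Set.uIcc (0:ℝ) Real.pi,
      FF s = ((1 + Real.cos s / 2 : ℝ) : ℂ) *
        Complex.exp (Complex.I * ((0 + 2 * s + 1 * Real.sin s : ℝ) : ℂ)) := by
    intro s hs
    rw [Set.uIcc_of_le hπ.le] at hs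
    unfold FF Phi
    congr 2
    rw [Real.arccos_cos hs.1 hs.2]
    have h1 : 1 - Real.cos s ^ 2 = Real.sin s ^ 2 := by
      have := Real.sin_sq_add_cos_sq s; linarith
    rw [h1, Real.sqrt_sq (Real.sin_nonneg_of_nonneg_of_le_pi hs.1 hs.2)]
    ring
  rw [intervalIntegral.integral_congr key]
  have hftc : ∀ s ∈ Set.uIcc (0:ℝ) Real.pi,
      HasDerivAt (fun t : ℝ => (2 * Complex.I)⁻¹ *
          Complex.exp (Complex.I * ((0 + 2 * t + 1 * Real.sin t : ℝ) : ℂ)))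
        (((1 + Real.cos s / 2 : ℝ) : ℂ) *
          Complex.exp (Complex.I * ((0 + 2 * s + 1 * Real.sin s : ℝ) : ℂ))) s := by
    intro s _
    have := (hasDerivAt_inner 0 2 1 s).const_mul ((2 * Complex.I)⁻¹)
    convert this using 1
    · rfl
    push_cast
    field_simp

  have hint : IntervalIntegrable (fun s => ((1 + Real.cos s / 2 : ℝ) : ℂ) *
      Complex.exp (Complex.I * ((0 + 2 * s + 1 * Real.sin s : ℝ) : ℂ)))
      MeasureTheory.volume 0 Real.pi := by
    apply Continuous.intervalIntegrable
    apply Continuous.mul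
    · exact Complex.continuous_ofReal.comp (by continuity)
    · exact Complex.continuous_exp.comp (continuous_const.mul
        (Complex.continuous_ofReal.comp (by continuity)))
  rw [intervalIntegral.integral_eq_sub_of_hasDerivAt hftc hint]
  have e1 : (0 + 2 * Real.pi + 1 * Real.sin Real.pi : ℝ) = 2 * Real.pi := by
    rw [Real.sin_pi]; ring
  have e2 : (0 + 2 * (0:ℝ) + 1 * Real.sin 0 : ℝ) = 0 := by rw [Real.sin_zero]; ring
  rw [e1, e2]
  have e3 : Complex.I * ((2 * Real.pi : ℝ) : ℂ) = 2 * Real.pi * Complex.I := by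
    push_cast; ring
  rw [e3, Complex.exp_two_pi_mul_I]
  simp

lemma int_FF_second : (∫ s in Real.pi..(2*Real.pi), FF s) = 0 := by
  have hπ := Real.pi_pos
  have key : ∀ s ∈ Set.uIcc Real.pi (2*Real.pi),
      FF s = ((1 + Real.cos s / 2 : ℝ) : ℂ) *
        Complex.exp (Complex.I * ((4*Real.pi + (-2) * s + (-1) * Real.sin s : ℝ) : ℂ)) := by
    intro s hs
    rw [Set.uIcc_of_le (by linarith)] at hs
    unfold FF Phi
    congr 2
    have h0 : Real.arccos (Real.cos s) = 2*Real.pi - s := by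
      rw [← Real.cos_two_pi_sub, Real.arccos_cos (by linarith [hs.2]) (by linarith [hs.1])]
    rw [h0]
    have h1 : 1 - Real.cos s ^ 2 = Real.sin s ^ 2 := by
      have := Real.sin_sq_add_cos_sq s; linarith
    have h2 : Real.sin s ≤ 0 := by
      have h3 : Real.sin (s - Real.pi) ≥ 0 :=
        Real.sin_nonneg_of_nonneg_of_le_pi (by linarith [hs.1]) (by linarith [hs.2])
      rw [Real.sin_sub_pi] at h3; linarith
    rw [h1, Real.sqrt_sq_eq_abs, abs_of_nonpos h2]
    ring
  rw [intervalIntegral.integral_congr key]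
  have hftc : ∀ s ∈ Set.uIcc Real.pi (2*Real.pi),
      HasDerivAt (fun t : ℝ => (-(2 * Complex.I)⁻¹) *
          Complex.exp (Complex.I * ((4*Real.pi + (-2) * t + (-1) * Real.sin t : ℝ) : ℂ)))
        (((1 + Real.cos s / 2 : ℝ) : ℂ) *
          Complex.exp (Complex.I * ((4*Real.pi + (-2) * s + (-1) * Real.sin s : ℝ) : ℂ))) s := by
    intro s _
    have := (hasDerivAt_inner (4*Real.pi) (-2) (-1) s).const_mul (-(2 * Complex.I)⁻¹)
    convert this using 1
    · rfl
    push_cast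
    field_simp
    ring
  have hint : IntervalIntegrable (fun s => ((1 + Real.cos s / 2 : ℝ) : ℂ) *
      Complex.exp (Complex.I * ((4*Real.pi + (-2) * s + (-1) * Real.sin s : ℝ) : ℂ)))
      MeasureTheory.volume Real.pi (2*Real.pi) := by
    apply Continuous.intervalIntegrable
    apply Continuous.mul
    · exact Complex.continuous_ofReal.comp (by continuity)
    · exact Complex.continuous_exp.comp (continuous_const.mul
        (Complex.continuous_ofReal.comp (by continuity)))
  rw [intervalIntegral.integral_eq_sub_of_hasDerivAt hftc hint]
  have e1 : (4*Real.pi + (-2) * (2*Real.pi) + (-1) * Real.sin (2*Real.pi) : ℝ) = 0 := by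
    rw [Real.sin_two_pi]; ring
  have e2 : (4*Real.pi + (-2) * Real.pi + (-1) * Real.sin Real.pi : ℝ) = 2 * Real.pi := by
    rw [Real.sin_pi]; ring
  rw [e1, e2]
  have e3 : Complex.I * ((2 * Real.pi : ℝ) : ℂ) = 2 * Real.pi * Complex.I := by
    push_cast; ring
  rw [e3, Complex.exp_two_pi_mul_I]
  simp

lemma int_FF : (∫ s in (0:ℝ)..(2*Real.pi), FF s) = 0 := by
  have h1 : IntervalIntegrable FF MeasureTheory.volume 0 Real.pi :=
    continuous_FF.intervalIntegrable _ _
  have h2 : IntervalIntegrable FF MeasureTheory.volume Real.pi (2*Real.pi) :=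
    continuous_FF.intervalIntegrable _ _
  rw [← intervalIntegral.integral_add_adjacent_intervals h1 h2, int_FF_first, int_FF_second,
    add_zero]

lemma int_FF_comp (m : ℕ) (hm : 0 < m) :
    (∫ θ in (0:ℝ)..(2*Real.pi), FF ((m:ℝ) * θ)) = 0 := by
  have hc : (m:ℝ) ≠ 0 := Nat.cast_ne_zero.mpr hm.ne'
  rw [intervalIntegral.integral_comp_mul_left FF hc]
  have h0 : (m:ℝ) * 0 = 0 := by ring
  have h1 : (m:ℝ) * (2*Real.pi) = 0 + (m:ℤ) • (2*Real.pi) := by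
    rw [zsmul_eq_mul]; push_cast; ring
  rw [h0, h1,
    FF_periodic.intervalIntegral_add_zsmul_eq (m:ℤ) 0
      (fun t₁ t₂ => continuous_FF.intervalIntegrable _ _)]
  rw [zero_add, int_FF]
  simp

/-- for every `N` there is an embedding of the circle into `ℂ` whose
Fourier coefficients vanish for all `|n| ≤ N`. -/
theorem exists_embedding_with_long_fourier_gap (N : ℕ) :
    ∃ f : ℂ → ℂ,
      ContinuousOn f (Metric.sphere (0 : ℂ) 1) ∧
      Set.InjOn f (Metric.sphere (0 : ℂ) 1) ∧
      ∀ n : ℤ, |n| ≤ (N : ℤ) → fCoeff f n = 0 := by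
  have hπ := Real.pi_pos
  obtain ⟨m, hm, hmbig⟩ : ∃ m : ℕ, 0 < m ∧ (N:ℤ) + 1 < (m:ℤ) :=
    ⟨2 * N + 3, by omega, by push_cast; omega⟩
  have hmR : (m:ℝ) ≠ 0 := Nat.cast_ne_zero.mpr hm.ne'
  refine ⟨fun z => z * Phi ((z ^ m).re), ?_, ?_, ?_⟩
  · -- continuity
    exact (continuous_id.mul
      (continuous_Phi.comp (Complex.continuous_re.comp (continuous_pow m)))).continuousOn
  · -- injectivity
    intro z₁ hz₁ z₂ hz₂ hf
    simp only [Metric.mem_sphere, dist_zero_right] at hz₁ hz₂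
    have hc₁ : |((z₁ ^ m).re)| ≤ 1 := by
      calc |((z₁ ^ m).re)| ≤ ‖z₁ ^ m‖ := Complex.abs_re_le_norm _
        _ = 1 := by rw [norm_pow, hz₁, one_pow]
    have hc₂ : |((z₂ ^ m).re)| ≤ 1 := by
      calc |((z₂ ^ m).re)| ≤ ‖z₂ ^ m‖ := Complex.abs_re_le_norm _
        _ = 1 := by rw [norm_pow, hz₂, one_pow]
    have hf' : z₁ * Phi ((z₁ ^ m).re) = z₂ * Phi ((z₂ ^ m).re) := hf
    have habs := congrArg norm hf'
    rw [norm_mul, norm_mul, hz₁, hz₂, one_mul, one_mul, abs_Phi hc₁, abs_Phi hc₂] at habs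
    have hcc : (z₁ ^ m).re = (z₂ ^ m).re := by linarith
    rw [hcc] at hf'
    exact mul_right_cancel₀ (Phi_ne_zero hc₂) hf'
  · -- Fourier coefficients
    intro n hn
    have key : ∀ θ : ℝ,
        (Complex.exp ((θ:ℂ) * Complex.I) * Phi (((Complex.exp ((θ:ℂ) * Complex.I)) ^ m).re)) *
            Complex.exp (-(n : ℂ) * (θ:ℂ) * Complex.I)
          = Complex.exp ((1 - (n:ℂ)) * (θ:ℂ) * Complex.I) * FF ((m:ℝ) * θ) := by
      intro θ
      have h1 : Complex.exp ((θ:ℂ) * Complex.I) ^ m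
          = Complex.exp ((((m:ℝ) * θ : ℝ) : ℂ) * Complex.I) := by
        rw [← Complex.exp_nat_mul]
        congr 1
        push_cast
        ring
      rw [h1, Complex.exp_ofReal_mul_I_re]
      have h2 : FF ((m:ℝ) * θ) = Phi (Real.cos ((m:ℝ) * θ)) := rfl
      rw [h2, mul_right_comm, ← Complex.exp_add]
      congr 2
      ring
    -- the integral
    set H : ℝ → ℂ :=
      fun θ => Complex.exp ((1 - (n:ℂ)) * (θ:ℂ) * Complex.I) * FF ((m:ℝ) * θ) with hH
    have contH : Continuous H := by
      apply Continuous.mul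
      · exact Complex.continuous_exp.comp
          ((continuous_const.mul Complex.continuous_ofReal).mul continuous_const)
      · exact continuous_FF.comp (continuous_const.mul continuous_id)
    have hJ : (∫ θ in (0:ℝ)..(2 * Real.pi), H θ) = 0 := by
      by_cases hn1 : n = 1
      · subst hn1
        have : ∀ θ : ℝ, H θ = FF ((m:ℝ) * θ) := by
          intro θ
          rw [hH]
          simp
        rw [intervalIntegral.integral_congr (fun θ _ => this θ)]
        exact int_FF_comp m hm
      · -- shift trick
        set c₀ : ℝ := 2 * Real.pi / m with hc₀
        set ω : ℂ := Complex.exp ((1 - (n:ℂ)) * (c₀:ℂ) * Complex.I) with hω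
        have Hper : Function.Periodic H (2 * Real.pi) := by
          intro θ
          rw [hH]
          simp only
          have e1 : (m:ℝ) * (θ + 2 * Real.pi) = (m:ℝ) * θ + (m:ℤ) • (2 * Real.pi) := by
            rw [zsmul_eq_mul]; push_cast; ring
          have e2 : FF ((m:ℝ) * (θ + 2 * Real.pi)) = FF ((m:ℝ) * θ) := by
            rw [e1, FF_periodic.zsmul m _]
          rw [e2]
          congr 1
          have : (1 - (n:ℂ)) * ((θ + 2*Real.pi : ℝ):ℂ) * Complex.I
              = (1 - (n:ℂ)) * (θ:ℂ) * Complex.I + ((1 - n : ℤ):ℂ) * (2*Real.pi*Complex.I) := by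
            push_cast; ring
          rw [this, Complex.exp_add, Complex.exp_int_mul_two_pi_mul_I, mul_one]
        have step : ∀ θ : ℝ, H (θ + c₀) = ω * H θ := by
          intro θ
          rw [hH, hω]
          simp only
          have e1 : (m:ℝ) * (θ + c₀) = (m:ℝ) * θ + 2 * Real.pi := by
            rw [hc₀]; field_simp
          rw [e1, FF_periodic ((m:ℝ) * θ)]
          rw [← mul_assoc, ← Complex.exp_add]
          congr 2
          push_cast
          ring
        have int1 : (∫ θ in (0:ℝ)..(2 * Real.pi), H (θ + c₀)) =
            ∫ θ in (0:ℝ)..(2 * Real.pi), H θ := by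
          rw [intervalIntegral.integral_comp_add_right H c₀]
          have h := Hper.intervalIntegral_add_eq c₀ 0
          rw [zero_add] at h
          rw [show (0:ℝ) + c₀ = c₀ by ring, show (2 * Real.pi + c₀) = c₀ + 2 * Real.pi by ring, h]
        have int2 : (∫ θ in (0:ℝ)..(2 * Real.pi), H (θ + c₀)) =
            ω * ∫ θ in (0:ℝ)..(2 * Real.pi), H θ := by
          rw [← intervalIntegral.integral_const_mul]
          exact intervalIntegral.integral_congr (fun θ _ => step θ)
        have heq : (ω - 1) * ∫ θ in (0:ℝ)..(2 * Real.pi), H θ = 0 := by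
          rw [sub_mul, one_mul, ← int2, int1, sub_self]
        rcases mul_eq_zero.mp heq with h | h
        · exfalso
          have hω1 : ω = 1 := by
            have := sub_eq_zero.mp h
            exact this
          rw [hω, Complex.exp_eq_one_iff] at hω1
          obtain ⟨k, hk⟩ := hω1
          have hk2 : (1 - (n:ℂ)) * (c₀:ℂ) = (k:ℂ) * (2 * Real.pi) := by
            have h3 : (1 - (n:ℂ)) * (c₀:ℂ) * Complex.I = ((k:ℂ) * (2 * Real.pi)) * Complex.I := by
              rw [hk]; ring
            exact mul_right_cancel₀ Complex.I_ne_zero h3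
          have hπC : ((Real.pi : ℝ) : ℂ) ≠ 0 := by
            exact_mod_cast Real.pi_ne_zero
          have hmC : ((m:ℕ) : ℂ) ≠ 0 := Nat.cast_ne_zero.mpr hm.ne'
          have hk3 : (1 - (n:ℂ)) = (k:ℂ) * (m:ℂ) := by
            rw [hc₀] at hk2
            have h2π : (2 * (Real.pi:ℂ)) ≠ 0 := by simp [hπC]
            push_cast at hk2
            field_simp [hmC, hπC] at hk2
            have hk2' : (1 - (n:ℂ)) * (2 * (Real.pi:ℂ))
                = ((k:ℂ) * (m:ℂ)) * (2 * (Real.pi:ℂ)) := by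
              linear_combination (2 * (Real.pi:ℂ)) * hk2
            exact mul_right_cancel₀ h2π hk2'
          have hk4 : (1 : ℤ) - n = k * m := by exact_mod_cast hk3
          have hnab := abs_le.mp hn
          rcases eq_or_ne k 0 with rfl | hk0
          · have h0 : (1:ℤ) - n = 0 := by simpa using hk4
            omega
          · have h5 : (m:ℤ) ≤ |k * m| := by
              rw [abs_mul]
              calc (m:ℤ) = 1 * m := (one_mul _).symm
                _ ≤ |k| * |(m:ℤ)| := by
                    apply mul_le_mul
                    · exact Int.one_le_abs hk0
                    · simp
                    · positivity
                    · positivity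
            rw [← hk4] at h5
            have h6 : |1 - n| ≤ (N:ℤ) + 1 := by
              rw [abs_le]
              constructor <;> linarith [hnab.1, hnab.2]
            linarith
        · exact h
    -- conclude
    show (1 / (2 * Real.pi) : ℂ) * _ = 0
    rw [intervalIntegral.integral_congr (fun θ _ => key θ), hJ, mul_zero]
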